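/- Let A, B be n×n complex positive definite matrices. If A ≥ I and A ◇_t B ≤ I (Loewner order) for some t ∈ (0, 1), then for all p ≥ 1 and all s ∈ [0, 1]: A^p ◇_s B^p ≤ (1/(1 − t + t·λ_n(A^{-1} ♯ B)))^{2p} · I, where λ_n(A^{-1} ♯ B) is the smallest eigenvalue of A^{-1} ♯ B. -/

import Mathlib

open scoped ComplexOrder Matrix

noncomputable section

/-- Real power of a (positive definite) matrix via the continuous functional calculus. -/
def mpow {n : ℕ} (A : Matrix (Fin n) (Fin n) ℂ) (t : ℝ) : Matrix (Fin n) (Fin n) ℂ :=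
  cfc (fun x : ℝ => x ^ t) A

/-- The matrix logarithm of a (positive definite) matrix via the continuous functional calculus. -/
def mlog {n : ℕ} (A : Matrix (Fin n) (Fin n) ℂ) : Matrix (Fin n) (Fin n) ℂ :=
  cfc Real.log A

/-- The metric geometric mean `A ♯ₜ B = A^{1/2} (A^{-1/2} B A^{-1/2})^t A^{1/2}`.
`A ♯ B` is `gmean A B (1/2)`. -/
def gmean {n : ℕ} (A B : Matrix (Fin n) (Fin n) ℂ) (t : ℝ) : Matrix (Fin n) (Fin n) ℂ :=
  mpow A (1/2) * mpow (mpow A (-(1/2)) * B * mpow A (-(1/2))) t * mpow A (1/2)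

/-- The Loewner order: `A ≤ B` iff `B - A` is positive semidefinite. -/
def LoewnerLE {n : ℕ} (A B : Matrix (Fin n) (Fin n) ℂ) : Prop :=
  (B - A).PosSemidef

/-- The near order: `A ⪯ B` iff `I ≤ A⁻¹ ♯ B` in the Loewner order. -/
def NearLE {n : ℕ} (A B : Matrix (Fin n) (Fin n) ℂ) : Prop :=
  LoewnerLE 1 (gmean A⁻¹ B (1/2))

/-- The spectral geometric mean `A ♮ₜ B = (A⁻¹ ♯ B)^t A (A⁻¹ ♯ B)^t`. -/
def smean {n : ℕ} (A B : Matrix (Fin n) (Fin n) ℂ) (t : ℝ) : Matrix (Fin n) (Fin n) ℂ :=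
  mpow (gmean A⁻¹ B (1/2)) t * A * mpow (gmean A⁻¹ B (1/2)) t

/-- The Wasserstein mean `A ◇ₜ B = [(1-t)I + t(A⁻¹ ♯ B)] A [(1-t)I + t(A⁻¹ ♯ B)]`. -/
def wmean {n : ℕ} (A B : Matrix (Fin n) (Fin n) ℂ) (t : ℝ) : Matrix (Fin n) (Fin n) ℂ :=
  (((1 - t : ℝ) : ℂ) • (1 : Matrix (Fin n) (Fin n) ℂ) + ((t : ℝ) : ℂ) • gmean A⁻¹ B (1/2)) * A *
    (((1 - t : ℝ) : ℂ) • (1 : Matrix (Fin n) (Fin n) ℂ) + ((t : ℝ) : ℂ) • gmean A⁻¹ B (1/2))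

/-- The arithmetic mean `A ∇ₜ B = (1-t)A + tB`. -/
def amean {n : ℕ} (A B : Matrix (Fin n) (Fin n) ℂ) (t : ℝ) : Matrix (Fin n) (Fin n) ℂ :=
  ((1 - t : ℝ) : ℂ) • A + ((t : ℝ) : ℂ) • B

/-- The matrix absolute value `|X| = (XᴴX)^{1/2}`. -/
def matAbs {n : ℕ} (X : Matrix (Fin n) (Fin n) ℂ) : Matrix (Fin n) (Fin n) ℂ :=
  mpow (Xᴴ * X) (1/2)

/-- The eigenvalues of a Hermitian matrix listed in nonincreasing order:
`eigDesc hA i` is `λ_{i+1}(A)`, so `eigDesc hA 0 = λ₁(A) ≥ eigDesc hA 1 = λ₂(A) ≥ ⋯`. -/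
def eigDesc {n : ℕ} {A : Matrix (Fin n) (Fin n) ℂ} (hA : A.IsHermitian) : Fin n → ℝ :=
  fun i => (hA.eigenvalues ∘ Tuple.sort hA.eigenvalues) i.rev

namespace Aux

variable {n : ℕ}

local notation "M" => Matrix (Fin n) (Fin n) ℂ

lemma contOn (f : ℝ → ℝ) (A : M) : ContinuousOn f (spectrum ℝ A) :=
  Matrix.finite_real_spectrum.continuousOn f

lemma cfc_herm (f : ℝ → ℝ) (A : M) : (cfc f A).IsHermitian :=
  cfc_predicate f A

-- Loewner basics
lemma loewner_refl (A : M) : LoewnerLE A A := by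
  simpa [LoewnerLE] using Matrix.PosSemidef.zero

lemma loewner_trans {A B C : M} (h1 : LoewnerLE A B) (h2 : LoewnerLE B C) :
    LoewnerLE A C := by
  have := h1.add h2
  simpa [LoewnerLE] using this

lemma loewner_conj {X Y : M} (h : LoewnerLE X Y) (C : M) (hC : C.IsHermitian) :
    LoewnerLE (C * X * C) (C * Y * C) := by
  have := h.mul_mul_conjTranspose_same C
  rw [hC.eq] at this
  unfold LoewnerLE
  rw [show C * Y * C - C * X * C = C * (Y - X) * C by noncomm_ring]
  exact this

lemma psd_real_smul {X : M} (hX : X.PosSemidef) {r : ℝ} (hr : 0 ≤ r) :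
    (((r : ℝ) : ℂ) • X).PosSemidef := by
  refine Matrix.posSemidef_iff_dotProduct_mulVec.mpr ⟨?_, ?_⟩
  · unfold Matrix.IsHermitian
    rw [Matrix.conjTranspose_smul, hX.1.eq]
    congr 1
    simp [Complex.ext_iff]
  · intro x
    rw [Matrix.smul_mulVec, dotProduct_smul, smul_eq_mul]
    exact mul_nonneg (by positivity) (hX.dotProduct_mulVec_nonneg x)

lemma loewner_smul {X Y : M} (h : LoewnerLE X Y) {r : ℝ} (hr : 0 ≤ r) :
    LoewnerLE (((r : ℝ) : ℂ) • X) (((r : ℝ) : ℂ) • Y) := by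
  unfold LoewnerLE
  rw [← smul_sub]
  exact psd_real_smul h hr

lemma loewner_add {X Y X' Y' : M} (h : LoewnerLE X Y) (h' : LoewnerLE X' Y') :
    LoewnerLE (X + X') (Y + Y') := by
  have := h.add h'
  unfold LoewnerLE
  rw [show Y + Y' - (X + X') = (Y - X) + (Y' - X') by abel]
  exact this

end Aux

namespace Aux2
open Aux
variable {n : ℕ}
local notation "M" => Matrix (Fin n) (Fin n) ℂ

lemma psd_unitary_conj_iff {U C : M} (hU : U ∈ Matrix.unitaryGroup (Fin n) ℂ) :
    (U * C * Uᴴ).PosSemidef ↔ C.PosSemidef := by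
  have h1 : U * Uᴴ = 1 := by
    simpa [Matrix.star_eq_conjTranspose] using Matrix.mem_unitaryGroup_iff.mp hU
  have h2 : Uᴴ * U = 1 := by
    simpa [Matrix.star_eq_conjTranspose] using Matrix.mem_unitaryGroup_iff'.mp hU
  constructor
  · intro h
    have := h.conjTranspose_mul_mul_same U
    rw [show Uᴴ * (U * C * Uᴴ) * U = (Uᴴ * U) * C * (Uᴴ * U) by noncomm_ring, h2,
      one_mul, mul_one] at this
    exact this
  · exact fun h => h.mul_mul_conjTranspose_same U

lemma posDef_conjTranspose_mul_mul {C : M} (B : M) (hC : C.PosDef) (hB : IsUnit B) :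
    (Bᴴ * C * B).PosDef := by
  refine Matrix.posDef_iff_dotProduct_mulVec.mpr ⟨Matrix.isHermitian_conjTranspose_mul_mul B hC.1, fun x hx => ?_⟩
  have hdet : IsUnit B.det := (Matrix.isUnit_iff_isUnit_det B).mp hB
  have hx' : B *ᵥ x ≠ 0 := by
    intro hc
    apply hx
    have := congrArg (fun v => B⁻¹ *ᵥ v) hc
    simpa [Matrix.mulVec_mulVec, Matrix.nonsing_inv_mul B hdet] using this
  simpa only [Matrix.star_mulVec, Matrix.dotProduct_mulVec, Matrix.vecMul_vecMul]
    using hC.dotProduct_mulVec_pos hx'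

lemma posDef_mul_mul_conjTranspose {C : M} (B : M) (hC : C.PosDef) (hB : IsUnit B) :
    (B * C * Bᴴ).PosDef := by
  have : IsUnit Bᴴ := by
    rw [Matrix.isUnit_iff_isUnit_det, Matrix.det_conjTranspose]
    exact ((Matrix.isUnit_iff_isUnit_det B).mp hB).star
  simpa using posDef_conjTranspose_mul_mul Bᴴ hC this

lemma isUnit_eigvecUnitary {A : M} (hA : A.IsHermitian) :
    IsUnit (hA.eigenvectorUnitary : M) := by
  have h1 : (hA.eigenvectorUnitary : M) * (hA.eigenvectorUnitary : M)ᴴ = 1 := by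
    simpa [Matrix.star_eq_conjTranspose] using
      Matrix.mem_unitaryGroup_iff.mp hA.eigenvectorUnitary.2
  rw [Matrix.isUnit_iff_isUnit_det]
  exact IsUnit.of_mul_eq_one _ (by rw [← Matrix.det_mul, h1, Matrix.det_one])

/-- Core order lemma. -/
lemma loewner_cfc_iff {A : M} (hA : A.IsHermitian) (f g : ℝ → ℝ) :
    LoewnerLE (cfc f A) (cfc g A) ↔ ∀ i, f (hA.eigenvalues i) ≤ g (hA.eigenvalues i) := by
  rw [LoewnerLE, hA.cfc_eq, hA.cfc_eq]
  unfold Matrix.IsHermitian.cfc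
  simp only [Unitary.conjStarAlgAut_apply]
  set U := (hA.eigenvectorUnitary : M) with hU
  have key : U * Matrix.diagonal (RCLike.ofReal ∘ g ∘ hA.eigenvalues) * star U -
      U * Matrix.diagonal (RCLike.ofReal ∘ f ∘ hA.eigenvalues) * star U =
      U * (Matrix.diagonal (fun i => ((g (hA.eigenvalues i) : ℂ) - (f (hA.eigenvalues i) : ℂ)))) * Uᴴ := by
    rw [Matrix.star_eq_conjTranspose]
    rw [show ∀ (X Y Z : M), X * Y * Z - X * ((Matrix.diagonal (RCLike.ofReal ∘ f ∘ hA.eigenvalues))) * Z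
        = X * (Y - Matrix.diagonal (RCLike.ofReal ∘ f ∘ hA.eigenvalues)) * Z from
      fun X Y Z => by noncomm_ring]
    rw [← Matrix.diagonal_sub]
    rfl
  rw [key, psd_unitary_conj_iff hA.eigenvectorUnitary.2, Matrix.posSemidef_diagonal_iff]
  constructor
  · intro hi i
    have := hi i
    rw [← Complex.ofReal_sub] at this
    have := Complex.zero_le_real.mp this
    linarith
  · intro hi i
    rw [← Complex.ofReal_sub]
    exact Complex.zero_le_real.mpr (by linarith [hi i])

lemma cfc_posDef {A : M} (hA : A.IsHermitian) (f : ℝ → ℝ)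
    (hf : ∀ i, 0 < f (hA.eigenvalues i)) : (cfc f A).PosDef := by
  rw [hA.cfc_eq]
  unfold Matrix.IsHermitian.cfc
  simp only [Unitary.conjStarAlgAut_apply]
  rw [Matrix.star_eq_conjTranspose]
  refine posDef_mul_mul_conjTranspose _ ?_ (isUnit_eigvecUnitary hA)
  refine Matrix.PosDef.diagonal fun i => ?_
  show (0 : ℂ) < ((f (hA.eigenvalues i) : ℝ) : ℂ)
  exact Complex.zero_lt_real.mpr (hf i)

lemma cfc_const_eq {A : M} (hA : A.IsHermitian) (r : ℝ) :
    cfc (fun _ : ℝ => r) A = ((r : ℝ) : ℂ) • (1 : M) := by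
  have h1 : cfc (fun _ : ℝ => r) A = algebraMap ℝ (Matrix (Fin n) (Fin n) ℂ) r :=
    cfc_const r A hA
  rw [h1, Algebra.algebraMap_eq_smul_one]
  ext i j
  simp [Complex.real_smul]

end Aux2

namespace Aux3
open Aux Aux2
variable {n : ℕ}
local notation "M" => Matrix (Fin n) (Fin n) ℂ

lemma spec_pos {A : M} (hA : A.PosDef) : ∀ x ∈ spectrum ℝ A, 0 < x := by
  intro x hx
  rw [hA.1.spectrum_real_eq_range_eigenvalues] at hx
  obtain ⟨i, rfl⟩ := hx
  exact hA.eigenvalues_pos i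

lemma mpow_herm (A : M) (r : ℝ) : (mpow A r).IsHermitian := cfc_herm _ _

lemma mpow_posDef {A : M} (hA : A.PosDef) (r : ℝ) : (mpow A r).PosDef :=
  cfc_posDef hA.1 _ (fun i => Real.rpow_pos_of_pos (hA.eigenvalues_pos i) r)

lemma mpow_mul_mpow {A : M} (hA : A.PosDef) (r s : ℝ) :
    mpow A r * mpow A s = mpow A (r + s) := by
  rw [mpow, mpow, mpow, ← cfc_mul _ _ A (contOn _ A) (contOn _ A)]
  exact cfc_congr fun x hx => (Real.rpow_add (spec_pos hA x hx) r s).symm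

lemma mpow_zero {A : M} (hA : A.IsHermitian) : mpow A 0 = 1 := by
  rw [mpow, show cfc (fun x : ℝ => x ^ (0:ℝ)) A = cfc (fun _ : ℝ => (1:ℝ)) A from
    cfc_congr fun x _ => Real.rpow_zero x]
  exact cfc_const_one ℝ A hA

lemma mpow_one {A : M} (hA : A.IsHermitian) : mpow A 1 = A := by
  rw [mpow, show cfc (fun x : ℝ => x ^ (1:ℝ)) A = cfc (fun x : ℝ => x) A from
    cfc_congr fun x _ => Real.rpow_one x]
  exact cfc_id' ℝ A hA

lemma inv_eq_cfc {A : M} (hA : A.PosDef) : A⁻¹ = cfc (fun x : ℝ => x⁻¹) A := by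
  apply Matrix.inv_eq_left_inv
  nth_rewrite 2 [show A = cfc (fun x : ℝ => x) A from (cfc_id' ℝ A hA.1).symm]
  rw [← cfc_mul _ _ A (contOn _ A) (contOn _ A)]
  rw [show cfc (fun x : ℝ => x⁻¹ * x) A = cfc (fun _ : ℝ => (1:ℝ)) A from
    cfc_congr fun x hx => inv_mul_cancel₀ (spec_pos hA x hx).ne']
  exact cfc_const_one ℝ A hA.1

lemma mpow_inv {A : M} (hA : A.PosDef) (r : ℝ) : mpow A⁻¹ r = mpow A (-r) := by
  have hcomp := cfc_comp (fun x : ℝ => x ^ r) (fun x : ℝ => x⁻¹) A hA.1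
    ((Matrix.finite_real_spectrum.image (fun x : ℝ => x⁻¹)).continuousOn
      (fun x : ℝ => x ^ r)) (contOn _ A)
  rw [mpow, inv_eq_cfc hA, ← hcomp]
  exact cfc_congr fun x hx => by
    rw [Function.comp_apply, ← Real.rpow_neg_one x, ← Real.rpow_mul (spec_pos hA x hx).le]
    norm_num

end Aux3


namespace Aux4
open Aux Aux2 Aux3
variable {n : ℕ}
local notation "M" => Matrix (Fin n) (Fin n) ℂ

lemma gmean_eq {A : M} (B : M) (hA : A.PosDef) :
    gmean A⁻¹ B (1/2) =
      mpow A (-(1/2)) * mpow (mpow A (1/2) * B * mpow A (1/2)) (1/2) * mpow A (-(1/2)) := by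
  unfold gmean
  rw [mpow_inv hA (1/2), mpow_inv hA (-(1/2)), neg_neg]

lemma inner_posDef {A B : M} (hA : A.PosDef) (hB : B.PosDef) :
    (mpow A (1/2) * B * mpow A (1/2)).PosDef := by
  have h := posDef_mul_mul_conjTranspose (mpow A (1/2)) hB (mpow_posDef hA (1/2)).isUnit
  rwa [(mpow_herm A (1/2)).eq] at h

lemma gmean_posDef {A B : M} (hA : A.PosDef) (hB : B.PosDef) :
    (gmean A⁻¹ B (1/2)).PosDef := by
  rw [gmean_eq B hA]
  have hT := mpow_posDef (inner_posDef hA hB) (1/2)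
  have h := posDef_mul_mul_conjTranspose (mpow A (-(1/2))) hT (mpow_posDef hA (-(1/2))).isUnit
  rwa [(mpow_herm A (-(1/2))).eq] at h

lemma gmean_conj {A B : M} (hA : A.PosDef) (hB : B.PosDef) :
    gmean A⁻¹ B (1/2) * A * gmean A⁻¹ B (1/2) = B := by
  rw [gmean_eq B hA]
  set R := mpow A (1/2) with hR
  set R' := mpow A (-(1/2)) with hR'
  set S := R * B * R with hS
  set T := mpow S (1/2) with hT
  have hR'R : R' * R = 1 := by
    rw [hR, hR', mpow_mul_mpow hA, show (-(1/2) + 1/2 : ℝ) = 0 by norm_num, mpow_zero hA.1]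
  have hRR' : R * R' = 1 := by
    rw [hR, hR', mpow_mul_mpow hA, show (1/2 + -(1/2) : ℝ) = 0 by norm_num, mpow_zero hA.1]
  have hA2 : R * R = A := by
    rw [hR, mpow_mul_mpow hA, show (1/2 + 1/2 : ℝ) = 1 by norm_num, mpow_one hA.1]
  have hS2 : T * T = S := by
    rw [hT, mpow_mul_mpow (inner_posDef hA hB), show (1/2 + 1/2 : ℝ) = 1 by norm_num,
      mpow_one (inner_posDef hA hB).1]
  have c1 : ∀ X : M, R' * (R * X) = X := fun X => by rw [← mul_assoc, hR'R, one_mul]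
  have c2 : ∀ X : M, R * (R' * X) = X := fun X => by rw [← mul_assoc, hRR', one_mul]
  have c3 : ∀ X : M, T * (T * X) = R * (B * (R * X)) := fun X => by
    rw [← mul_assoc, hS2, hS]; simp only [mul_assoc]
  rw [← hA2]
  simp only [mul_assoc, c1, c2, c3, hRR', hR'R, mul_one, one_mul]

end Aux4


namespace Aux5
open Aux Aux2 Aux3 Aux4
variable {n : ℕ}
local notation "M" => Matrix (Fin n) (Fin n) ℂ

lemma wmean_le {X Y : M} (hX : X.PosDef) (hY : Y.PosDef) {β s : ℝ}
    (hs0 : 0 ≤ s) (hs1 : s ≤ 1)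
    (hXβ : LoewnerLE X (((β : ℝ) : ℂ) • 1)) (hYβ : LoewnerLE Y (((β : ℝ) : ℂ) • 1)) :
    LoewnerLE (wmean X Y s) (((β : ℝ) : ℂ) • 1) := by
  have hG := gmean_posDef hX hY
  have hYG : gmean X⁻¹ Y (1/2) * X * gmean X⁻¹ Y (1/2) = Y := gmean_conj hX hY
  set G := gmean X⁻¹ Y (1/2) with hGdef
  set b : ℂ := ((s : ℝ) : ℂ) with hb
  have ha : ((1 - s : ℝ) : ℂ) = 1 - b := by push_cast; ring
  have hw : wmean X Y s =
      ((1 - b) • 1 + b • G) * X * ((1 - b) • 1 + b • G) := by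
    unfold wmean; rw [← hGdef, ha]
  have key : ((1 - b) • X + b • Y) - wmean X Y s
      = ((s * (1 - s) : ℝ) : ℂ) • ((1 - G) * X * (1 - G)) := by
    rw [hw, ← hYG, show ((s * (1 - s) : ℝ) : ℂ) = b * (1 - b) by push_cast; ring]
    simp only [sub_mul, mul_sub, add_mul, mul_add, smul_mul_assoc, mul_smul_comm, smul_smul,
      one_mul, mul_one]
    module
  have herm1G : ((1 : M) - G).IsHermitian := Matrix.IsHermitian.sub Matrix.isHermitian_one hG.1
  have psd1 : (((s * (1 - s) : ℝ) : ℂ) • ((1 - G) * X * (1 - G))).PosSemidef := by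
    apply psd_real_smul _ (by nlinarith)
    have h := hX.posSemidef.mul_mul_conjTranspose_same ((1 : M) - G)
    rwa [herm1G.eq] at h
  have step1 : LoewnerLE (wmean X Y s) ((1 - b) • X + b • Y) := by
    unfold LoewnerLE
    rw [key]
    exact psd1
  have step2 : LoewnerLE ((1 - b) • X + b • Y) (((β : ℝ) : ℂ) • 1) := by
    have e : ((β : ℝ) : ℂ) • (1 : M) =
        ((1 - s : ℝ) : ℂ) • (((β : ℝ) : ℂ) • (1 : M)) + ((s : ℝ) : ℂ) • (((β : ℝ) : ℂ) • (1 : M)) := by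
      rw [ha]; module
    rw [e, show ((1 : ℂ) - b) • X = ((1 - s : ℝ) : ℂ) • X by rw [ha]]
    exact loewner_add (loewner_smul hXβ (by linarith)) (loewner_smul hYβ hs0)
  exact loewner_trans step1 step2

end Aux5


open Aux Aux2 Aux3 Aux4 Aux5 in
/-- if `A ≥ I` and `A ◇ₜ B ≤ I` for some `t ∈ (0,1)`, then for all `p ≥ 1`
and `s ∈ [0,1]`: `Aᵖ ◇ₛ Bᵖ ≤ (1/(1 − t + t λₙ(A⁻¹ ♯ B)))^{2p} I`, where
`λₙ(A⁻¹ ♯ B) = ⨅ i, μ i` is the smallest eigenvalue of `A⁻¹ ♯ B`. -/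
theorem wmean_power_upper_bound {n : ℕ} (A B : Matrix (Fin n) (Fin n) ℂ)
    (hA : A.PosDef) (hB : B.PosDef) (h : (gmean A⁻¹ B (1/2)).IsHermitian)
    (t : ℝ) (ht0 : 0 < t) (ht1 : t < 1)
    (hAI : LoewnerLE 1 A) (hWI : LoewnerLE (wmean A B t) 1) :
    ∀ p s : ℝ, 1 ≤ p → 0 ≤ s → s ≤ 1 →
      LoewnerLE (wmean (mpow A p) (mpow B p) s)
        ((((1 / (1 - t + t * (⨅ i, h.eigenvalues i))) ^ (2 * p) : ℝ) : ℂ) •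
          (1 : Matrix (Fin n) (Fin n) ℂ)) := by
  intro p s hp hs0 hs1
  rcases Nat.eq_zero_or_pos n with hn | hn
  · subst hn
    unfold LoewnerLE
    refine ⟨?_, fun x => ?_⟩
    · ext i j; exact i.elim0
    · simp [dotProduct, Finsupp.sum, Finset.eq_empty_of_isEmpty x.support]
  haveI : Nonempty (Fin n) := ⟨⟨0, hn⟩⟩
  set G := gmean A⁻¹ B (1/2) with hGdef
  have hGpd : G.PosDef := gmean_posDef hA hB
  have hGAG : G * A * G = B := gmean_conj hA hB
  have heigpos : ∀ i, 0 < h.eigenvalues i := fun i => hGpd.eigenvalues_pos i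
  set lam := ⨅ i, h.eigenvalues i with hlam
  obtain ⟨i₀, -, hi₀⟩ :=
    Finset.exists_min_image Finset.univ h.eigenvalues ⟨⟨0, hn⟩, Finset.mem_univ _⟩
  have hlam_eq : lam = h.eigenvalues i₀ :=
    le_antisymm (ciInf_le (Finite.bddBelow_range _) i₀)
      (le_ciInf fun i => hi₀ i (Finset.mem_univ i))
  have hlam_le : ∀ i, lam ≤ h.eigenvalues i := fun i => ciInf_le (Finite.bddBelow_range _) i
  have hlampos : 0 < lam := hlam_eq ▸ heigpos i₀
  set m : ℝ → ℝ := fun x => (1 - t) + t * x with hm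
  have hmpos : ∀ i, 0 < m (h.eigenvalues i) := fun i => by
    have := heigpos i; simp only [hm]; nlinarith
  set c := 1 - t + t * lam with hc
  have hcpos : 0 < c := by rw [hc]; nlinarith
  have hcm : ∀ i, c ≤ m (h.eigenvalues i) := fun i => by
    have := hlam_le i; simp only [hm, hc]; nlinarith
  -- M := (1-t)•1 + t•G as cfc
  have hMcfc : cfc m G = ((1 - t : ℝ) : ℂ) • (1 : Matrix (Fin n) (Fin n) ℂ) + ((t : ℝ) : ℂ) • G := by
    have e1 : cfc m G = algebraMap ℝ (Matrix (Fin n) (Fin n) ℂ) (1 - t) +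
        cfc (fun x : ℝ => t * x) G :=
      cfc_const_add (1 - t) (fun x : ℝ => t * x) G (contOn _ G) hGpd.1
    have e2 : cfc (fun x : ℝ => t * x) G = t • G := cfc_const_mul_id t G hGpd.1
    rw [e1, e2, Algebra.algebraMap_eq_smul_one]
    ext i j
    simp [Matrix.add_apply, Complex.real_smul]
  have hMherm : (cfc m G).IsHermitian := cfc_herm m G
  have hW : LoewnerLE (cfc m G * A * cfc m G) 1 := by rw [hMcfc]; exact hWI
  have hMM : LoewnerLE (cfc m G * cfc m G) 1 := by
    have h1 : LoewnerLE (cfc m G * 1 * cfc m G) (cfc m G * A * cfc m G) :=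
      loewner_conj hAI _ hMherm
    rw [mul_one] at h1
    exact loewner_trans h1 hW
  have hMM' : ∀ i, m (h.eigenvalues i) * m (h.eigenvalues i) ≤ 1 := by
    have e1 : cfc m G * cfc m G = cfc (fun x => m x * m x) G :=
      (cfc_mul _ _ G (contOn _ G) (contOn _ G)).symm
    have e2 : (1 : Matrix (Fin n) (Fin n) ℂ) = cfc (fun _ : ℝ => (1 : ℝ)) G :=
      (cfc_const_one ℝ G hGpd.1).symm
    have h2 := hMM
    rw [e1, e2] at h2
    exact (loewner_cfc_iff h _ _).mp h2
  have hmle1 : ∀ i, m (h.eigenvalues i) ≤ 1 := fun i => by nlinarith [hmpos i, hMM' i]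
  have heigle1 : ∀ i, h.eigenvalues i ≤ 1 := fun i => by
    have := hmle1 i; simp only [hm] at this; nlinarith
  set α := c⁻¹ * c⁻¹ with hα
  have hαpos : 0 < α := by positivity
  -- A ≤ α • 1
  have hspec : ∀ x ∈ spectrum ℝ G, ∃ i, h.eigenvalues i = x := by
    intro x hx
    rw [h.spectrum_real_eq_range_eigenvalues] at hx
    exact hx.imp fun i hi => hi
  have hMinv : cfc (fun x => (m x)⁻¹) G * cfc m G = 1 := by
    rw [← cfc_mul _ _ G (contOn _ G) (contOn _ G),
      show cfc (fun x => (m x)⁻¹ * m x) G = cfc (fun _ : ℝ => (1 : ℝ)) G from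
        cfc_congr fun x hx => by
          obtain ⟨i, rfl⟩ := hspec x hx
          exact inv_mul_cancel₀ (hmpos i).ne']
    exact cfc_const_one ℝ G hGpd.1
  have hMinv' : cfc m G * cfc (fun x => (m x)⁻¹) G = 1 := by
    rw [← cfc_mul _ _ G (contOn _ G) (contOn _ G),
      show cfc (fun x => m x * (m x)⁻¹) G = cfc (fun _ : ℝ => (1 : ℝ)) G from
        cfc_congr fun x hx => by
          obtain ⟨i, rfl⟩ := hspec x hx
          exact mul_inv_cancel₀ (hmpos i).ne']
    exact cfc_const_one ℝ G hGpd.1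
  have hstep : LoewnerLE A (cfc (fun x => (m x)⁻¹ * (m x)⁻¹) G) := by
    have h2 := loewner_conj hW (cfc (fun x => (m x)⁻¹) G) (cfc_herm _ G)
    rw [mul_one] at h2
    rw [show cfc (fun x => (m x)⁻¹) G * (cfc m G * A * cfc m G) * cfc (fun x => (m x)⁻¹) G
        = A by
      calc cfc (fun x => (m x)⁻¹) G * (cfc m G * A * cfc m G) * cfc (fun x => (m x)⁻¹) G
          = (cfc (fun x => (m x)⁻¹) G * cfc m G) * A *
            (cfc m G * cfc (fun x => (m x)⁻¹) G) := by noncomm_ring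
        _ = A := by rw [hMinv, hMinv', one_mul, mul_one]] at h2
    rwa [← cfc_mul _ _ G (contOn _ G) (contOn _ G)] at h2
  have hAα : LoewnerLE A (((α : ℝ) : ℂ) • 1) := by
    refine loewner_trans hstep ?_
    rw [← cfc_const_eq hGpd.1 α]
    exact (loewner_cfc_iff h _ _).mpr fun i => by
      have h1 := hcm i; have h2 := hmpos i
      have h3 : (m (h.eigenvalues i))⁻¹ ≤ c⁻¹ := by
        apply inv_anti₀ hcpos h1
      rw [hα]
      exact mul_le_mul h3 h3 (by positivity) (by positivity)
  -- eigenvalues of A and A^p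
  have heigA_le : ∀ i, hA.1.eigenvalues i ≤ α := by
    have h2 := hAα
    rw [show A = cfc (fun x : ℝ => x) A from (cfc_id' ℝ A hA.1).symm,
      ← cfc_const_eq hA.1 α] at h2
    exact (loewner_cfc_iff hA.1 _ _).mp h2
  have hApow : LoewnerLE (mpow A p) (((α ^ p : ℝ) : ℂ) • 1) := by
    rw [← cfc_const_eq hA.1 (α ^ p)]
    exact (loewner_cfc_iff hA.1 _ _).mpr fun i =>
      Real.rpow_le_rpow (hA.eigenvalues_pos i).le (heigA_le i) (by linarith)
  -- B ≤ α • 1 and B^p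
  have hGid : G = cfc (fun x : ℝ => x) G := (cfc_id' ℝ G hGpd.1).symm
  have hGG : LoewnerLE (G * G) 1 := by
    have e : G * G = cfc (fun x : ℝ => x * x) G := by
      conv_lhs => rw [hGid]
      rw [← cfc_mul _ _ G (contOn _ G) (contOn _ G)]
    rw [e, ← cfc_const_one ℝ G hGpd.1]
    exact (loewner_cfc_iff h _ _).mpr fun i => by nlinarith [heigpos i, heigle1 i]
  have hBα : LoewnerLE B (((α : ℝ) : ℂ) • 1) := by
    have h1 : LoewnerLE (G * A * G) (G * (((α : ℝ) : ℂ) • 1) * G) := loewner_conj hAα G hGpd.1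
    rw [hGAG] at h1
    rw [show G * (((α : ℝ) : ℂ) • 1) * G = ((α : ℝ) : ℂ) • (G * G) by
      rw [mul_smul_comm, smul_mul_assoc, mul_one]] at h1
    exact loewner_trans h1 (loewner_smul hGG hαpos.le)
  have heigB_le : ∀ i, hB.1.eigenvalues i ≤ α := by
    have h2 := hBα
    rw [show B = cfc (fun x : ℝ => x) B from (cfc_id' ℝ B hB.1).symm,
      ← cfc_const_eq hB.1 α] at h2
    exact (loewner_cfc_iff hB.1 _ _).mp h2
  have hBpow : LoewnerLE (mpow B p) (((α ^ p : ℝ) : ℂ) • 1) := by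
    rw [← cfc_const_eq hB.1 (α ^ p)]
    exact (loewner_cfc_iff hB.1 _ _).mpr fun i =>
      Real.rpow_le_rpow (hB.eigenvalues_pos i).le (heigB_le i) (by linarith)
  -- conclude
  have hwle := wmean_le (mpow_posDef hA p) (mpow_posDef hB p) hs0 hs1 hApow hBpow
  have hexp : (1 / c) ^ (2 * p) = α ^ p := by
    rw [Real.rpow_mul (by positivity : (0:ℝ) ≤ 1 / c) 2 p]
    congr 1
    rw [show (2 : ℝ) = ((2 : ℕ) : ℝ) by norm_num, Real.rpow_natCast]
    rw [hα]
    field_simp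
  rw [hexp]
  exact hwle
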